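/- Let n : ℕ, let I ∈ Matrix (Fin n) (Fin n) ℤ be symmetric with det I ≠ 0, and let K : Fin n → ℤ. Suppose j : Fin n satisfies K j = -(I j j). Then, setting K' = K + 2 • I.mulVec (Pi.single j 1), one has K' ⬝ᵥ I⁻¹.mulVec K' = K ⬝ᵥ I⁻¹.mulVec K, where I⁻¹ is the rational inverse of I and the computation takes place in ℚ. -/

import Mathlib

open Matrix

lemma symm_dot_comm {n : ℕ} (B : Matrix (Fin n) (Fin n) ℚ) (hB : B.IsSymm)
    (x y : Fin n → ℚ) : x ⬝ᵥ B.mulVec y = y ⬝ᵥ B.mulVec x := by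
  rw [dotProduct_mulVec, ← mulVec_transpose, hB.eq, dotProduct_comm]

/-- The full-path step preserves the square: if `K j = -(I j j)`, then
`K' = K + 2 • I.mulVec (Pi.single j 1)` has the same square as `K`, where squares are
computed in `ℚ` with the rational inverse of the symmetric matrix `I` with `det I ≠ 0`. -/
theorem square_invariant_full_path_step (n : ℕ) (I : Matrix (Fin n) (Fin n) ℤ)
    (hI : I.IsSymm) (hdet : I.det ≠ 0) (K : Fin n → ℤ) (j : Fin n)
    (hj : K j = -(I j j)) :
    (fun i => (((K + 2 • I.mulVec (Pi.single j 1)) i : ℤ) : ℚ)) ⬝ᵥ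
        (I.map ((↑) : ℤ → ℚ))⁻¹.mulVec
          (fun i => (((K + 2 • I.mulVec (Pi.single j 1)) i : ℤ) : ℚ))
      = (fun i => ((K i : ℤ) : ℚ)) ⬝ᵥ
        (I.map ((↑) : ℤ → ℚ))⁻¹.mulVec (fun i => ((K i : ℤ) : ℚ)) := by
  set A : Matrix (Fin n) (Fin n) ℚ := I.map ((↑) : ℤ → ℚ) with hA
  have hAsymm : A.IsSymm := by
    simp [Matrix.IsSymm, hA, ← Matrix.transpose_map, hI.eq]
  have hAdet : IsUnit A.det := by
    have : A.det = (I.det : ℚ) := by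
      rw [hA]; exact (RingHom.map_det (Int.castRingHom ℚ) I).symm
    rw [this]
    exact isUnit_iff_ne_zero.mpr (by exact_mod_cast hdet)
  have hinv : A⁻¹ * A = 1 := Matrix.nonsing_inv_mul A hAdet
  set u : Fin n → ℚ := fun i => ((K i : ℤ) : ℚ) with hu
  set e : Fin n → ℚ := Pi.single j 1 with he
  have hfe : (((Int.castRingHom ℚ)) : ℤ → ℚ) ∘ Pi.single j 1 = e := by
    funext k; by_cases h : k = j <;> simp [he, h]
  have hmap : ∀ i, (((I.mulVec (Pi.single j 1)) i : ℤ) : ℚ) = (A.mulVec e) i := by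
    intro i
    have := RingHom.map_mulVec (Int.castRingHom ℚ) I (Pi.single j 1) i
    rw [hfe] at this
    simpa [hA] using this
  have hK' : (fun i => (((K + 2 • I.mulVec (Pi.single j 1)) i : ℤ) : ℚ))
      = u + (2 : ℚ) • A.mulVec e := by
    funext i
    simp only [Pi.add_apply, Pi.smul_apply, nsmul_eq_mul, smul_eq_mul, Int.cast_add,
      Int.cast_mul, Int.cast_ofNat, Nat.cast_ofNat, hmap i]
    rw [he, Matrix.mulVec_single]
    simp [hA, Matrix.map_apply]
    rfl
  have hcancel : ∀ x : Fin n → ℚ, A⁻¹.mulVec (A.mulVec x) = x := by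
    intro x
    rw [Matrix.mulVec_mulVec, hinv, Matrix.one_mulVec]
  have hAinvsymm : A⁻¹.IsSymm := by
    rw [Matrix.IsSymm, Matrix.transpose_nonsing_inv, hAsymm.eq]
  rw [hK']
  rw [Matrix.mulVec_add, Matrix.mulVec_smul, hcancel]
  rw [add_dotProduct, dotProduct_add, dotProduct_add]
  have h1 : u ⬝ᵥ (2 : ℚ) • e = 2 * u j := by
    simp [dotProduct_smul, he, dotProduct_single]
  have h2 : ((2 : ℚ) • A.mulVec e) ⬝ᵥ A⁻¹.mulVec u = 2 * u j := by
    rw [smul_dotProduct, symm_dot_comm A⁻¹ hAinvsymm, hcancel]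
    simp [he, dotProduct_single]
  have h3 : ((2 : ℚ) • A.mulVec e) ⬝ᵥ (2 : ℚ) • e = 4 * (I j j : ℚ) := by
    rw [smul_dotProduct, dotProduct_smul]
    simp only [smul_eq_mul]
    rw [Matrix.mulVec_single]
    rw [hA]
    simp [Matrix.map_apply, he, dotProduct_single]
    ring
  rw [h1, h2, h3]
  have : u j = -(I j j : ℚ) := by
    show ((K j : ℤ) : ℚ) = _
    rw [hj]; push_cast; ring
  rw [this]; ring
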